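/- arXiv:1901.01967 — 4 statements merged into one kernel-verified Lean document; each statement's English description precedes it below -/
import Mathlib

section
/- Let n be a positive integer and let t, s be real numbers. Then SL₂(ℤ)·u_t·a(n) = SL₂(ℤ)·v_s (where u_t is the upper unipotent matrix with entry t, v_s the lower unipotent with entry s, and a(n) = diag(n⁻¹, n)) if and only if there exists an integer j coprime to n such that t = j/n and s = j×/n where j·j× ≡ 1 mod n. Moreover, SL₂(ℤ)·u_{j/n}·a(n) ∈ SL₂(ℤ)·V whenever gcd(j,n) = 1. -/
lemma key_construct (n : ℕ) (hn : 0 < n) (j jx k : ℤ) (hk : j * jx - 1 = n * k) :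
    ∃ γ : Matrix (Fin 2) (Fin 2) ℤ, γ.det = 1 ∧
      γ.map ((↑) : ℤ → ℝ) *
          (!![1, (j : ℝ) / n; 0, 1] * !![((n : ℝ))⁻¹, 0; 0, (n : ℝ)]) =
        !![1, 0; (jx : ℝ) / n, 1] := by
  have hn0 : (n : ℝ) ≠ 0 := Nat.cast_ne_zero.2 hn.ne'
  have hcast : ((j : ℝ) * jx - 1) = (n : ℝ) * k := by exact_mod_cast congrArg (Int.cast : ℤ → ℝ) hk
  refine ⟨!![(n : ℤ), -j; jx, -k], ?_, ?_⟩
  · have : (n : ℤ) * (-k) - (-j) * jx = 1 := by linarith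
    simpa [Matrix.det_fin_two] using this
  · ext i l
    fin_cases i <;> fin_cases l <;>
      simp [Matrix.mul_apply, Fin.sum_univ_two] <;> field_simp <;> linarith

/-- For a positive integer `n` and reals `t, s`, the cosets
`SL₂(ℤ) uₜ a(n)` and `SL₂(ℤ) v_s` coincide (i.e. some integer matrix of
determinant one maps `uₜ a(n)` to `v_s`) if and only if there are integers
`j, j×` with `gcd(j,n) = 1`, `j·j× ≡ 1 (mod n)`, `t = j/n` and `s = j×/n`.
Moreover, for any `j` coprime to `n` the point `SL₂(ℤ) u_{j/n} a(n)` lies in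
`SL₂(ℤ) V`. -/
theorem stmt_0 (n : ℕ) (hn : 0 < n) (t s : ℝ) :
    ((∃ γ : Matrix (Fin 2) (Fin 2) ℤ, γ.det = 1 ∧
        γ.map ((↑) : ℤ → ℝ) * (!![1, t; 0, 1] * !![((n : ℝ))⁻¹, 0; 0, (n : ℝ)]) =
          !![1, 0; s, 1]) ↔
      (∃ j jx : ℤ, Int.gcd j (n : ℤ) = 1 ∧ j * jx ≡ 1 [ZMOD (n : ℤ)] ∧
        t = (j : ℝ) / n ∧ s = (jx : ℝ) / n)) ∧
    (∀ j : ℤ, Int.gcd j (n : ℤ) = 1 →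
      ∃ γ : Matrix (Fin 2) (Fin 2) ℤ, γ.det = 1 ∧ ∃ s' : ℝ,
        γ.map ((↑) : ℤ → ℝ) *
            (!![1, (j : ℝ) / n; 0, 1] * !![((n : ℝ))⁻¹, 0; 0, (n : ℝ)]) =
          !![1, 0; s', 1]) := by
  have hn0 : (n : ℝ) ≠ 0 := Nat.cast_ne_zero.2 hn.ne'
  constructor
  · constructor
    · rintro ⟨γ, hdet, h⟩
      set a := γ 0 0 with ha
      set b := γ 0 1 with hb
      set c := γ 1 0 with hc
      set d := γ 1 1 with hd
      have h00 := congrFun (congrFun h 0) 0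
      have h01 := congrFun (congrFun h 0) 1
      have h10 := congrFun (congrFun h 1) 0
      have h11 := congrFun (congrFun h 1) 1
      simp [Matrix.mul_apply, Fin.sum_univ_two, ← ha, ← hb, ← hc, ← hd] at h00 h01 h10 h11
      rw [Matrix.det_fin_two, ← ha, ← hb, ← hc, ← hd] at hdet
      -- a = n
      have han : a = (n : ℤ) := by
        have : (a : ℝ) = (n : ℝ) := by field_simp at h00; exact_mod_cast h00
        exact_mod_cast this
      refine ⟨-b, c, ?_, ?_, ?_, ?_⟩
      · rw [Int.isCoprime_iff_gcd_eq_one.symm]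
        exact ⟨c, d, by rw [han] at hdet; linarith⟩
      · have : (n : ℤ) ∣ 1 - (-b) * c := ⟨d, by rw [han] at hdet; linarith⟩
        exact (Int.modEq_iff_dvd.mpr this)
      · -- t = -b / n
        rw [han] at h01
        have h01' : t * (n : ℝ) + (b : ℤ) = 0 := by
          have h2 : (n : ℝ) * (t * n + b) = 0 := by push_cast at h01; linear_combination h01
          rcases mul_eq_zero.mp h2 with h' | h'
          · exact absurd h' hn0
          · exact h'
        field_simp
        push_cast
        linear_combination h01'
      · rw [← h10]; push_cast; field_simp
    · rintro ⟨j, jx, hgcd, hmod, ht, hs⟩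
      have hdvd : (n : ℤ) ∣ 1 - j * jx := Int.ModEq.dvd hmod
      obtain ⟨k, hk⟩ := hdvd
      obtain ⟨γ, h1, h2⟩ := key_construct n hn j jx (-k) (by linarith)
      exact ⟨γ, h1, by rw [ht, hs]; exact h2⟩
  · intro j hgcd
    obtain ⟨u, v, huv⟩ := Int.isCoprime_iff_gcd_eq_one.mpr hgcd
    obtain ⟨γ, h1, h2⟩ := key_construct n hn j u (-v) (by linarith)
    exact ⟨γ, h1, (u : ℝ) / n, h2⟩
end

section
/- Let (X, μ, T) be an invertible measure-preserving system on a probability space, let f ∈ L²(X, μ) be real-valued with ∫f dμ = E_f, and suppose there exist a constant S(f) ≥ ‖f‖₂ and a bounded, symmetric, monotonically-decreasing-on-[0,∞) function ψ: ℝ → ℝ₊ with |⟨f∘Tᵏ, f⟩ - E_f²| ≤ ψ(k)·S(f)² for all k ∈ ℤ. Then for every ς ∈ (0,1) and every K ∈ ℕ, ‖(1/K)∑_{n=0}^{K-1} f∘Tⁿ - E_f‖₂² ≤ C·(K^{-ς} + ψ(K^{1-ς}))·S(f)² for an absolute constant C. -/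
open MeasureTheory

open Finset

variable {X : Type} [MeasurableSpace X] {μ : Measure X}

lemma mp_pow (e : Equiv.Perm X) (h : MeasurePreserving e μ μ) (n : ℕ) :
    MeasurePreserving (e ^ n : Equiv.Perm X) μ μ := by
  induction n with
  | zero => simpa using MeasurePreserving.id μ
  | succ k ih =>
      have : ((e ^ (k+1) : Equiv.Perm X) : X → X) = (e ^ k : Equiv.Perm X) ∘ e := by
        ext x; simp [pow_succ, Equiv.Perm.mul_apply]
      rw [this]; exact ih.comp h

lemma mp_zpow (e : Equiv.Perm X) (h : MeasurePreserving e μ μ)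
    (h' : MeasurePreserving e.symm μ μ) (k : ℤ) :
    MeasurePreserving (e ^ k : Equiv.Perm X) μ μ := by
  obtain ⟨n, rfl | rfl⟩ := Int.eq_nat_or_neg k
  · simpa [zpow_natCast] using mp_pow e h n
  · have : (e ^ (-(n:ℤ)) : Equiv.Perm X) = (e.symm ^ n : Equiv.Perm X) := by
      rw [zpow_neg, zpow_natCast, ← inv_pow, Equiv.Perm.inv_def]
    rw [this]; exact mp_pow e.symm h' n

lemma memb (e : Equiv.Perm X) (h : MeasurePreserving e μ μ)
    (h' : MeasurePreserving e.symm μ μ) : MeasurableEmbedding (e : X → X) := by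
  let me : X ≃ᵐ X := ⟨e, h.measurable, h'.measurable⟩
  exact me.measurableEmbedding

lemma abs_mul_le_half (a b : ℝ) : |a * b| ≤ (a ^ 2 + b ^ 2) / 2 := by
  rw [abs_mul]
  nlinarith [sq_nonneg (|a| - |b|), sq_abs a, sq_abs b]

lemma int_mul {u v : X → ℝ} (hu : MemLp u 2 μ) (hv : MemLp v 2 μ) :
    Integrable (fun x => u x * v x) μ := by
  refine Integrable.mono' ((hu.integrable_sq.add hv.integrable_sq).div_const 2)
    (hu.aestronglyMeasurable.mul hv.aestronglyMeasurable) ?_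
  filter_upwards with x
  have := abs_mul (u x) (v x)
  rw [Real.norm_eq_abs]
  simp only [Pi.add_apply]
  nlinarith [sq_nonneg (|u x| - |v x|), sq_abs (u x), sq_abs (v x), abs_mul (u x) (v x)]

lemma int_sq_le {f : X → ℝ} (hf : MemLp f 2 μ) {S : ℝ} (hS : (eLpNorm f 2 μ).toReal ≤ S) :
    ∫ x, f x * f x ∂μ ≤ S ^ 2 := by
  have h1 : ∫ x, f x * f x ∂μ = @inner ℝ _ _ (hf.toLp f) (hf.toLp f) := by
    rw [L2.inner_def]
    refine integral_congr_ae ?_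
    filter_upwards [hf.coeFn_toLp] with x hx
    simp [hx, sq]
  rw [h1, real_inner_self_eq_norm_sq]
  have h2 : ‖hf.toLp f‖ = (eLpNorm f 2 μ).toReal := by
    rw [Lp.norm_toLp]
  rw [h2]
  have := ENNReal.toReal_nonneg (a := eLpNorm f 2 μ)
  nlinarith
/-- effective von Neumann ergodic theorem. There is an absolute
constant `C > 0` such that: for every invertible measure-preserving system
`(X, μ, T)` on a probability space, every real-valued `f ∈ L²(μ)` with mean
`E_f = ∫ f`, every `S ≥ ‖f‖₂` and every bounded, symmetric `ψ : ℝ → ℝ₊`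
monotone decreasing on `[0,∞)` satisfying
`|⟨f∘Tᵏ, f⟩ - E_f²| ≤ ψ(k)·S²` for all `k ∈ ℤ`, one has, for every
`ς ∈ (0,1)` and `K ≥ 1`,
`‖(1/K)∑_{n<K} f∘Tⁿ - E_f‖₂² ≤ C·(K^{-ς} + ψ(K^{1-ς}))·S²`. -/
theorem stmt_2 :
    ∃ C : ℝ, 0 < C ∧
      ∀ (X : Type) (_ : MeasurableSpace X) (μ : Measure X),
        IsProbabilityMeasure μ →
        ∀ T : Equiv.Perm X,
          MeasurePreserving T μ μ → MeasurePreserving T.symm μ μ →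
        ∀ f : X → ℝ, MemLp f 2 μ →
        ∀ S : ℝ, (eLpNorm f 2 μ).toReal ≤ S →
        ∀ ψ : ℝ → ℝ,
          (∀ x, 0 ≤ ψ x) → (∃ B, ∀ x, ψ x ≤ B) → (∀ x, ψ (-x) = ψ x) →
          AntitoneOn ψ (Set.Ici 0) →
          (∀ k : ℤ,
            |(∫ x, f ((T ^ k) x) * f x ∂μ) - (∫ x, f x ∂μ) ^ 2| ≤
              ψ (k : ℝ) * S ^ 2) →
        ∀ ς : ℝ, 0 < ς → ς < 1 → ∀ K : ℕ, 1 ≤ K →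
          (∫ x, ((∑ n ∈ Finset.range K, f ((T ^ n) x)) / (K : ℝ)
              - ∫ x, f x ∂μ) ^ 2 ∂μ) ≤
            C * ((K : ℝ) ^ (-ς) + ψ ((K : ℝ) ^ ((1 : ℝ) - ς))) * S ^ 2 := by
  refine ⟨3, by norm_num, ?_⟩
  intro X mX μ hμ T hT hTs f hf S hS ψ hψ0 _ hψsym hψa hcorr ς hς0 hς1 K hK
  set E : ℝ := ∫ x, f x ∂μ with hE
  have hS0 : 0 ≤ S := le_trans ENNReal.toReal_nonneg hS
  set g : X → ℝ := fun x => f x - E with hgdef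
  have hg : MemLp g 2 μ := hf.sub (memLp_const E)
  have hfint : Integrable f μ := hf.integrable one_le_two
  have hTk : ∀ k : ℤ, MeasurePreserving ((T ^ k : Equiv.Perm X) : X → X) μ μ :=
    mp_zpow T hT hTs
  have hTke : ∀ k : ℤ, MeasurableEmbedding ((T ^ k : Equiv.Perm X) : X → X) := by
    intro k
    refine memb _ (hTk k) ?_
    have h1 : ((T ^ k : Equiv.Perm X).symm : X → X) = ((T ^ (-k) : Equiv.Perm X) : X → X) := by
      rw [zpow_neg, Equiv.Perm.inv_def]
    rw [h1]; exact hTk (-k)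
  have hfk : ∀ k : ℤ, MemLp (fun x => f ((T ^ k) x)) 2 μ := fun k =>
    hf.comp_measurePreserving (hTk k)
  have hgk : ∀ k : ℤ, MemLp (fun x => g ((T ^ k) x)) 2 μ := fun k =>
    hg.comp_measurePreserving (hTk k)
  have hgkn : ∀ n : ℕ, MemLp (fun x => g ((T ^ n) x)) 2 μ := by
    intro n; have := hgk (n : ℤ); simpa [zpow_natCast] using this
  set I : ℤ → ℝ := fun j => ∫ x, g ((T ^ j) x) * g x ∂μ with hIdef
  -- key shift identity
  have key : ∀ n m : ℤ, ∫ x, g ((T ^ n) x) * g ((T ^ m) x) ∂μ = I (n - m) := by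
    intro n m
    have h1 := (hTk m).integral_comp (hTke m) (fun x => g ((T ^ (n - m)) x) * g x)
    rw [hIdef]
    dsimp only
    rw [← h1]
    apply integral_congr_ae
    filter_upwards with x
    have h2 : (T ^ (n - m) : Equiv.Perm X) ((T ^ m) x) = (T ^ n) x := by
      rw [← Equiv.Perm.mul_apply, ← zpow_add]
      norm_num
    rw [h2]
  -- I j in terms of correlations
  have hIj : ∀ j : ℤ, I j = (∫ x, f ((T ^ j) x) * f x ∂μ) - E ^ 2 := by
    intro j
    have iA : Integrable (fun x => f ((T ^ j) x) * f x) μ := int_mul (hfk j) hf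
    have iB : Integrable (fun x => E * f ((T ^ j) x)) μ :=
      ((hfk j).integrable one_le_two).const_mul E
    have iC : Integrable (fun x => E * f x) μ := hfint.const_mul E
    have e1 : ∫ x, f ((T ^ j) x) ∂μ = E := (hTk j).integral_comp (hTke j) f
    have iAB : Integrable (fun x => f ((T ^ j) x) * f x - E * f ((T ^ j) x)) μ := iA.sub iB
    have iABC : Integrable (fun x => f ((T ^ j) x) * f x - E * f ((T ^ j) x) - E * f x) μ :=
      iAB.sub iC
    have h3 : I j = ∫ x, (f ((T ^ j) x) * f x - E * f ((T ^ j) x) - E * f x + E ^ 2) ∂μ := by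
      rw [hIdef]
      apply integral_congr_ae
      filter_upwards with x
      simp only [hgdef]
      ring
    rw [h3, integral_add iABC (integrable_const _),
      integral_sub iAB iC, integral_sub iA iB, integral_const_mul,
      integral_const_mul, e1, integral_const]
    simp [measure_univ, ← hE]
    ring
  have hIψ : ∀ j : ℤ, |I j| ≤ ψ (j : ℝ) * S ^ 2 := by
    intro j; rw [hIj j]; exact hcorr j
  have hgsq : ∫ x, g x * g x ∂μ ≤ S ^ 2 := by
    have h0 : I 0 = ∫ x, g x * g x ∂μ := by simp [hIdef]
    have h1 := hIj 0
    rw [h0] at h1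
    have h2 : ∫ x, f ((T ^ (0:ℤ)) x) * f x ∂μ = ∫ x, f x * f x ∂μ := by simp
    rw [h2] at h1
    have h3 := int_sq_le hf hS
    nlinarith [sq_nonneg E]
  have hIS : ∀ j : ℤ, |I j| ≤ S ^ 2 := by
    intro j
    have h1 : |I j| ≤ ∫ x, |g ((T ^ j) x) * g x| ∂μ := by
      rw [hIdef]
      dsimp only
      have := norm_integral_le_integral_norm (μ := μ) (f := fun x => g ((T ^ j) x) * g x)
      simpa only [Real.norm_eq_abs] using this
    have h2 : ∫ x, |g ((T ^ j) x) * g x| ∂μ ≤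
        ∫ x, ((g ((T ^ j) x)) ^ 2 + (g x) ^ 2) / 2 ∂μ := by
      refine integral_mono (int_mul (hgk j) hg).abs
        (((hgk j).integrable_sq.add hg.integrable_sq).div_const 2) ?_
      intro x
      dsimp only
      exact abs_mul_le_half _ _
    have h3 : ∫ x, ((g ((T ^ j) x)) ^ 2 + (g x) ^ 2) / 2 ∂μ ≤ S ^ 2 := by
      rw [integral_div, integral_add (hgk j).integrable_sq hg.integrable_sq]
      have h4 : ∫ x, (g ((T ^ j) x)) ^ 2 ∂μ = ∫ x, (g x) ^ 2 ∂μ :=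
        (hTk j).integral_comp (hTke j) (fun x => (g x) ^ 2)
      have h5 : ∫ x, (g x) ^ 2 ∂μ = ∫ x, g x * g x ∂μ := by
        apply integral_congr_ae; filter_upwards with x; ring
      rw [h4, h5]
      linarith
    linarith
  -- numeric setup
  have hK0 : (0 : ℝ) < K := by exact_mod_cast hK
  set M : ℝ := (K : ℝ) ^ ((1 : ℝ) - ς) with hM
  have hM1 : 1 ≤ M := Real.one_le_rpow (by exact_mod_cast hK) (by linarith)
  have hM0 : 0 ≤ M := by linarith
  -- rewrite the averaged function
  have step1 : ∀ x : X, (∑ n ∈ range K, f ((T ^ n) x)) / (K : ℝ) - E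
      = (∑ n ∈ range K, g ((T ^ n) x)) / (K : ℝ) := by
    intro x
    have h1 : ∑ n ∈ range K, g ((T ^ n) x)
        = (∑ n ∈ range K, f ((T ^ n) x)) - K * E := by
      simp only [hgdef]
      rw [Finset.sum_sub_distrib, Finset.sum_const, card_range]
      push_cast; ring
    rw [h1]
    field_simp
  have step2 : (∫ x, ((∑ n ∈ range K, f ((T ^ n) x)) / (K : ℝ) - E) ^ 2 ∂μ)
      = (∑ n ∈ range K, ∑ m ∈ range K, I ((n : ℤ) - m)) / (K : ℝ) ^ 2 := by
    have h1 : (∫ x, ((∑ n ∈ range K, f ((T ^ n) x)) / (K : ℝ) - E) ^ 2 ∂μ)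
        = ∫ x, (∑ n ∈ range K, ∑ m ∈ range K, g ((T ^ n) x) * g ((T ^ m) x)) / (K : ℝ) ^ 2 ∂μ := by
      apply integral_congr_ae
      filter_upwards with x
      rw [step1 x, div_pow, sq (∑ n ∈ range K, g ((T ^ n) x)), Finset.sum_mul_sum]
    rw [h1, integral_div, integral_finset_sum _
      (fun n _ => integrable_finset_sum _ (fun m _ => int_mul (hgkn n) (hgkn m)))]
    congr 1
    refine Finset.sum_congr rfl fun n _ => ?_
    rw [integral_finset_sum _ (fun m _ => int_mul (hgkn n) (hgkn m))]
    refine Finset.sum_congr rfl fun m _ => ?_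
    have := key (n : ℤ) (m : ℤ)
    simpa [zpow_natCast] using this
  -- termwise bound
  have term_le : ∀ n m : ℕ, I ((n : ℤ) - m)
      ≤ ψ M * S ^ 2 + (if |(n : ℝ) - m| ≤ M then S ^ 2 else 0) := by
    intro n m
    by_cases hc : |(n : ℝ) - (m : ℝ)| ≤ M
    · rw [if_pos hc]
      have h1 := (abs_le.mp (hIS ((n : ℤ) - m))).2
      have h2 : 0 ≤ ψ M * S ^ 2 := mul_nonneg (hψ0 M) (sq_nonneg S)
      linarith
    · rw [if_neg hc, add_zero]
      push_neg at hc
      have h1 := (abs_le.mp (hIψ ((n : ℤ) - m))).2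
      have hcast : (((n : ℤ) - m : ℤ) : ℝ) = (n : ℝ) - m := by push_cast; ring
      rw [hcast] at h1
      have h3 : ψ ((n : ℝ) - m) = ψ (|(n : ℝ) - m|) := by
        rcases abs_choice ((n : ℝ) - m) with h | h
        · rw [h]
        · rw [h, hψsym]
      have h2 : ψ ((n : ℝ) - m) ≤ ψ M := by
        rw [h3]
        exact hψa (Set.mem_Ici.mpr hM0) (Set.mem_Ici.mpr (abs_nonneg _)) (le_of_lt hc)
      calc I ((n : ℤ) - m) ≤ ψ ((n : ℝ) - m) * S ^ 2 := h1
        _ ≤ ψ M * S ^ 2 := mul_le_mul_of_nonneg_right h2 (sq_nonneg S)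
  -- counting
  have hcard : ∀ n : ℕ,
      (((range K).filter (fun m : ℕ => |(n : ℝ) - (m : ℝ)| ≤ M)).card : ℝ) ≤ 3 * M := by
    intro n
    set d := ⌊M⌋₊ with hd
    have hsub : (range K).filter (fun m : ℕ => |(n : ℝ) - (m : ℝ)| ≤ M)
        ⊆ Finset.Icc (n - d) (n + d) := by
      intro m hm
      simp only [Finset.mem_filter, Finset.mem_range] at hm
      obtain ⟨-, hm2⟩ := hm
      rw [abs_le] at hm2
      have e1 : n ≤ m + d := by
        rcases le_or_gt n m with h | h
        · omega
        · have h5 : ((n - m : ℕ) : ℝ) ≤ M := by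
            rw [Nat.cast_sub (le_of_lt h)]; linarith [hm2.2]
          have := Nat.le_floor h5
          omega
      have e2 : m ≤ n + d := by
        rcases le_or_gt m n with h | h
        · omega
        · have h5 : ((m - n : ℕ) : ℝ) ≤ M := by
            rw [Nat.cast_sub (le_of_lt h)]; linarith [hm2.1]
          have := Nat.le_floor h5
          omega
      exact Finset.mem_Icc.mpr ⟨by omega, e2⟩
    have h1 := Finset.card_le_card hsub
    rw [Nat.card_Icc] at h1
    have h2 : n + d + 1 - (n - d) ≤ 2 * d + 1 := by omega
    have h3 : (d : ℝ) ≤ M := Nat.floor_le hM0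
    have h4 : (((range K).filter (fun m : ℕ => |(n : ℝ) - (m : ℝ)| ≤ M)).card : ℝ)
        ≤ ((2 * d + 1 : ℕ) : ℝ) := by exact_mod_cast le_trans h1 h2
    have h5 : ((2 * d + 1 : ℕ) : ℝ) = 2 * (d : ℝ) + 1 := by push_cast; ring
    rw [h5] at h4
    linarith
  -- sum bound
  have sum_le : ∑ n ∈ range K, ∑ m ∈ range K, I ((n : ℤ) - m)
      ≤ (K : ℝ) ^ 2 * (ψ M * S ^ 2) + 3 * K * M * S ^ 2 := by
    have h1 : ∑ n ∈ range K, ∑ m ∈ range K, I ((n : ℤ) - m)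
        ≤ ∑ n ∈ range K, ∑ m ∈ range K,
            (ψ M * S ^ 2 + (if |(n : ℝ) - m| ≤ M then S ^ 2 else 0)) :=
      Finset.sum_le_sum fun n _ => Finset.sum_le_sum fun m _ => term_le n m
    have h2 : ∀ n : ℕ, ∑ m ∈ range K,
        (ψ M * S ^ 2 + (if |(n : ℝ) - m| ≤ M then S ^ 2 else 0))
        ≤ (K : ℝ) * (ψ M * S ^ 2) + 3 * M * S ^ 2 := by
      intro n
      rw [Finset.sum_add_distrib, Finset.sum_const, card_range, nsmul_eq_mul]
      have h3 : ∑ m ∈ range K, (if |(n : ℝ) - m| ≤ M then S ^ 2 else 0)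
          = (((range K).filter (fun m : ℕ => |(n : ℝ) - (m : ℝ)| ≤ M)).card : ℝ) * S ^ 2 := by
        rw [← Finset.sum_filter, Finset.sum_const, nsmul_eq_mul]
      rw [h3]
      have := mul_le_mul_of_nonneg_right (hcard n) (sq_nonneg S)
      linarith
    calc ∑ n ∈ range K, ∑ m ∈ range K, I ((n : ℤ) - m)
        ≤ ∑ n ∈ range K, ((K : ℝ) * (ψ M * S ^ 2) + 3 * M * S ^ 2) :=
          le_trans h1 (Finset.sum_le_sum fun n _ => h2 n)
      _ = (K : ℝ) * ((K : ℝ) * (ψ M * S ^ 2) + 3 * M * S ^ 2) := by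
          rw [Finset.sum_const, card_range, nsmul_eq_mul]
      _ = (K : ℝ) ^ 2 * (ψ M * S ^ 2) + 3 * K * M * S ^ 2 := by ring
  -- final computation
  have hMK : M / (K : ℝ) = (K : ℝ) ^ (-ς) := by
    rw [hM]
    rw [show ((K : ℝ) ^ ((1 : ℝ) - ς) / (K : ℝ)) = (K : ℝ) ^ ((1 : ℝ) - ς) / (K : ℝ) ^ (1 : ℝ) by
      rw [Real.rpow_one]]
    rw [← Real.rpow_sub hK0]
    congr 1
    ring
  have hK2 : (0 : ℝ) < (K : ℝ) ^ 2 := by positivity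
  rw [step2]
  have hfinal : (∑ n ∈ range K, ∑ m ∈ range K, I ((n : ℤ) - m)) / (K : ℝ) ^ 2
      ≤ ((K : ℝ) ^ 2 * (ψ M * S ^ 2) + 3 * K * M * S ^ 2) / (K : ℝ) ^ 2 :=
    (div_le_div_iff_of_pos_right hK2).mpr sum_le
  refine le_trans hfinal ?_
  have hrw : ((K : ℝ) ^ 2 * (ψ M * S ^ 2) + 3 * K * M * S ^ 2) / (K : ℝ) ^ 2
      = ψ M * S ^ 2 + 3 * (M / K) * S ^ 2 := by
    field_simp
  rw [hrw, hMK]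
  have hψM : 0 ≤ ψ M := hψ0 M
  have hKς : 0 ≤ (K : ℝ) ^ (-ς) := Real.rpow_nonneg (le_of_lt hK0) _
  nlinarith [sq_nonneg S]
end

section
/- Let 𝔬 be the ring of integers of a number field and let ε > 0. Then for all nonzero ideals I ⊆ 𝔬 with N(I) sufficiently large, one has N(I)^{1-ε} < φ(I) < N(I), where φ(I) = |(𝔬/I)^×|. -/
open NumberField UniqueFactorizationMonoid

set_option synthInstance.maxHeartbeats 1000000
set_option maxHeartbeats 1000000

section aux

theorem nat_card_units_pi {ι : Type*} [Fintype ι] (M : ι → Type*) [∀ i, CommMonoid (M i)] :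
    Nat.card (∀ i, M i)ˣ = ∏ i, Nat.card (M i)ˣ := by
  rw [← Nat.card_pi]
  exact Nat.card_congr
    ⟨fun u i => ⟨u.val i, u.inv i, congrFun u.val_inv i, congrFun u.inv_val i⟩,
     fun f => ⟨fun i => (f i : M i), fun i => ((f i)⁻¹ : (M i)ˣ),
       funext fun i => (f i).val_inv, funext fun i => (f i).inv_val⟩,
     fun u => Units.ext rfl, fun f => rfl⟩

theorem nat_card_units_eq (M : Type*) [CommMonoid M] :
    Nat.card Mˣ = Nat.card {x : M // IsUnit x} := by
  refine Nat.card_congr ((Submonoid.unitsTypeEquivIsUnitSubmonoid (M := M)).toEquiv.trans ?_)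
  exact Equiv.subtypeEquivRight fun x => by simp [IsUnit.mem_submonoid_iff]

end aux

section main

variable {K : Type} [Field K] [NumberField K]

theorem isUnit_mk_pow_iff {P : Ideal (𝓞 K)} [hPp : P.IsPrime] (hP : P ≠ ⊥) {e : ℕ} (he : e ≠ 0)
    (x : 𝓞 K) : IsUnit (Ideal.Quotient.mk (P ^ e) x) ↔ x ∉ P := by
  constructor
  · rintro h hx
    obtain ⟨z, hz⟩ := h.exists_right_inv
    obtain ⟨w, rfl⟩ := Ideal.Quotient.mk_surjective z
    rw [← map_mul, ← map_one (Ideal.Quotient.mk (P ^ e)), Ideal.Quotient.eq] at hz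
    have h1 : x * w - 1 ∈ P := Ideal.pow_le_self he hz
    have h2 : x * w ∈ P := Ideal.mul_mem_right w P hx
    have : (1 : 𝓞 K) ∈ P := by
      have := P.sub_mem h2 h1
      simpa using this
    exact hPp.ne_top (Ideal.eq_top_iff_one P |>.mpr this)
  · intro hx
    haveI : P.IsMaximal := Ideal.IsPrime.isMaximal hPp hP
    obtain ⟨y, z, hzP, hyz⟩ := Ideal.IsMaximal.exists_inv ‹P.IsMaximal› hx
    have hnil : IsNilpotent (Ideal.Quotient.mk (P ^ e) z) := by
      refine ⟨e, ?_⟩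
      rw [← map_pow, Ideal.Quotient.eq_zero_iff_mem]
      exact Ideal.pow_mem_pow hzP e
    have hu : IsUnit (1 - Ideal.Quotient.mk (P ^ e) z) := IsNilpotent.isUnit_one_sub hnil
    have hxy : Ideal.Quotient.mk (P ^ e) y * Ideal.Quotient.mk (P ^ e) x
        = 1 - Ideal.Quotient.mk (P ^ e) z := by
      rw [← map_mul]
      rw [eq_sub_iff_add_eq, ← map_add, hyz, map_one]
    exact isUnit_of_mul_isUnit_right (hxy ▸ hu)

theorem card_units_quot_pow {P : Ideal (𝓞 K)} [hPp : P.IsPrime] (hP : P ≠ ⊥) {e : ℕ} (he : e ≠ 0) :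
    (Nat.card ((𝓞 K ⧸ P ^ e)ˣ) : ℝ) =
      (Ideal.absNorm (P ^ e) : ℝ) * (1 - 1 / (Ideal.absNorm P : ℝ)) := by
  classical
  have hQbot : P ^ e ≠ ⊥ := by
    rw [← Ideal.zero_eq_bot] at hP ⊢
    exact pow_ne_zero e hP
  haveI : Fintype (𝓞 K ⧸ P ^ e) := @Fintype.ofFinite _ (Ideal.finiteQuotientOfFreeOfNeBot _ hQbot)
  have hle : P ^ e ≤ P := Ideal.pow_le_self he
  have hcard : Nat.card (Submodule.map (P ^ e : Ideal (𝓞 K)).mkQ P) * Nat.card (𝓞 K ⧸ P) =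
      Nat.card (𝓞 K ⧸ P ^ e) :=
    Submodule.card_quotient_mul_card_quotient P (P ^ e) hle
  have hchar : ∀ z : 𝓞 K ⧸ P ^ e,
      ¬ IsUnit z ↔ z ∈ Submodule.map (P ^ e : Ideal (𝓞 K)).mkQ P := by
    intro z
    obtain ⟨x, rfl⟩ := Ideal.Quotient.mk_surjective z
    rw [isUnit_mk_pow_iff hP he, not_not]
    constructor
    · exact fun h => ⟨x, h, rfl⟩
    · rintro ⟨y, hy, hxy⟩
      have : y - x ∈ P ^ e := (Submodule.Quotient.eq _).mp hxy
      have : y - x ∈ P := hle this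
      simpa using P.sub_mem hy this
  -- Nat.card of units + card of nonunit submodule = total
  have h1 : Nat.card ((𝓞 K ⧸ P ^ e)ˣ) +
      Nat.card (Submodule.map (P ^ e : Ideal (𝓞 K)).mkQ P) = Nat.card (𝓞 K ⧸ P ^ e) := by
    rw [nat_card_units_eq]
    have h2 : Nat.card (Submodule.map (P ^ e : Ideal (𝓞 K)).mkQ P) =
        Nat.card {z : 𝓞 K ⧸ P ^ e // ¬ IsUnit z} :=
      Nat.card_congr (Equiv.subtypeEquivRight fun z => (hchar z).symm)
    rw [h2]
    simp only [Nat.card_eq_fintype_card]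
    rw [Fintype.card_subtype_compl]
    exact Nat.add_sub_of_le (Fintype.card_subtype_le _)
  -- translate absNorm
  have hNpow : Ideal.absNorm (P ^ e) = Nat.card (𝓞 K ⧸ P ^ e) := rfl
  have hNP : Ideal.absNorm P = Nat.card (𝓞 K ⧸ P) := rfl
  have hNPne' : Ideal.absNorm P ≠ 0 := fun h => hP (Ideal.absNorm_eq_zero_iff.mp h)
  have hNPne : (Ideal.absNorm P : ℝ) ≠ 0 := Nat.cast_ne_zero.mpr hNPne'
  -- final computation
  have ht : (Nat.card (Submodule.map (P ^ e : Ideal (𝓞 K)).mkQ P) : ℝ)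
      = (Ideal.absNorm (P ^ e) : ℝ) / (Ideal.absNorm P : ℝ) := by
    rw [eq_div_iff hNPne]
    have h3 := hcard
    rw [← hNpow, ← hNP] at h3
    exact_mod_cast h3
  have hφ : (Nat.card ((𝓞 K ⧸ P ^ e)ˣ) : ℝ)
      = (Ideal.absNorm (P ^ e) : ℝ)
        - (Nat.card (Submodule.map (P ^ e : Ideal (𝓞 K)).mkQ P) : ℝ) := by
    have := congrArg (fun n : ℕ => (n : ℝ)) h1
    push_cast at this
    rw [hNpow]
    linarith
  rw [hφ, ht]
  field_simp

open scoped Classical in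
theorem prod_pow_count_factors (I : Ideal (𝓞 K)) (hI : I ≠ ⊥) :
    ∏ P ∈ (factors I).toFinset, P ^ (factors I).count P = I :=
  calc ∏ P ∈ (factors I).toFinset, P ^ (factors I).count P
      = ((factors I).map id).prod := by
        rw [Finset.prod_multiset_map_count (factors I) id]
        simp
    _ = (factors I).prod := by rw [Multiset.map_id]
    _ = I := associated_iff_eq.mp (factors_prod hI)

open scoped Classical in
theorem card_units_quot_eq (I : Ideal (𝓞 K)) (hI : I ≠ ⊥) :
    (Nat.card ((𝓞 K ⧸ I)ˣ) : ℝ) = (Ideal.absNorm I : ℝ) *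
      ∏ P ∈ (factors I).toFinset, (1 - 1 / (Ideal.absNorm P : ℝ)) := by
  have hprod := prod_pow_count_factors I hI
  have hcards : Nat.card ((𝓞 K ⧸ I)ˣ) = ∏ P ∈ (factors I).toFinset,
      Nat.card ((𝓞 K ⧸ P ^ (factors I).count P)ˣ) := by
    have h0 : Nat.card ((𝓞 K ⧸ I)ˣ) = Nat.card
        ((∀ P : (factors I).toFinset,
          𝓞 K ⧸ (P : Ideal (𝓞 K)) ^ (Multiset.count (P : Ideal (𝓞 K)) (factors I)))ˣ) :=
      Nat.card_congr (Units.mapEquiv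
        (IsDedekindDomain.quotientEquivPiFactors hI).toMulEquiv).toEquiv
    rw [h0, nat_card_units_pi]
    exact Finset.prod_coe_sort (factors I).toFinset (fun P => Nat.card ((𝓞 K ⧸ P ^ (factors I).count P)ˣ))
  have hfact : ∀ P ∈ (factors I).toFinset,
      (Nat.card ((𝓞 K ⧸ P ^ (factors I).count P)ˣ) : ℝ) =
        (Ideal.absNorm (P ^ (factors I).count P) : ℝ) * (1 - 1 / (Ideal.absNorm P : ℝ)) := by
    intro P hP
    have hPprime : Prime P := prime_of_factor P (Multiset.mem_toFinset.mp hP)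
    haveI : P.IsPrime := Ideal.isPrime_of_prime hPprime
    have hPbot : P ≠ ⊥ := by
      rw [← Ideal.zero_eq_bot]; exact hPprime.ne_zero
    have hcount : (factors I).count P ≠ 0 :=
      Multiset.count_ne_zero.mpr (Multiset.mem_toFinset.mp hP)
    exact card_units_quot_pow hPbot hcount
  have hnat : Ideal.absNorm I = ∏ P ∈ (factors I).toFinset,
      Ideal.absNorm (P ^ (factors I).count P) := by
    conv_lhs => rw [← hprod]
    exact map_prod Ideal.absNorm _ _
  have hnorm : (Ideal.absNorm I : ℝ) =
      ∏ P ∈ (factors I).toFinset, (Ideal.absNorm (P ^ (factors I).count P) : ℝ) := by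
    rw [hnat, Nat.cast_prod]
  rw [hcards]
  push_cast
  rw [Finset.prod_congr rfl hfact, Finset.prod_mul_distrib, ← hnorm]

theorem exists_T (δ : ℝ) (hδ : 0 < δ) :
    ∃ T : ℕ, ∀ n : ℕ, T < n → (n : ℝ) ^ (-δ) ≤ 1 - 1 / (n : ℝ) := by
  have hg : Filter.Tendsto (fun x : ℝ => 1 - 1 / x) Filter.atTop (nhds 1) := by
    have : Filter.Tendsto (fun x : ℝ => 1 / x) Filter.atTop (nhds 0) := by
      simpa [one_div] using tendsto_inv_atTop_zero
    simpa using Filter.Tendsto.sub (tendsto_const_nhds (x := (1:ℝ))) this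
  have h1 : Filter.Tendsto (fun x : ℝ => x ^ δ * (1 - 1 / x)) Filter.atTop Filter.atTop :=
    Filter.Tendsto.atTop_mul_pos zero_lt_one (tendsto_rpow_atTop hδ) hg
  obtain ⟨x₀, hx₀⟩ := Filter.eventually_atTop.mp (h1.eventually_ge_atTop 1)
  refine ⟨⌈x₀⌉₊, fun n hn => ?_⟩
  have hnx : x₀ ≤ (n : ℝ) :=
    le_trans (Nat.le_ceil x₀) (by exact_mod_cast Nat.cast_le.mpr hn.le)
  have h2 : 1 ≤ (n : ℝ) ^ δ * (1 - 1 / (n : ℝ)) := hx₀ _ hnx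
  have hnpos : (0 : ℝ) < n := by
    have : 0 < n := Nat.lt_of_le_of_lt (Nat.zero_le _) hn
    exact_mod_cast this
  have hpos : (0 : ℝ) < (n : ℝ) ^ δ := Real.rpow_pos_of_pos hnpos δ
  rw [Real.rpow_neg (le_of_lt hnpos)]
  calc ((n : ℝ) ^ δ)⁻¹ = ((n : ℝ) ^ δ)⁻¹ * 1 := (mul_one _).symm
    _ ≤ ((n : ℝ) ^ δ)⁻¹ * ((n : ℝ) ^ δ * (1 - 1 / (n : ℝ))) :=
        mul_le_mul_of_nonneg_left h2 (inv_nonneg.mpr hpos.le)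
    _ = 1 - 1 / (n : ℝ) := by field_simp

end main

/-- Let `𝔬` be the ring of integers of a number field and
`ε > 0`. Then for all nonzero ideals `I ⊆ 𝔬` of sufficiently large norm,
`N(I)^{1-ε} < φ(I) < N(I)`, where `φ(I) = |(𝔬/I)ˣ|`. -/
theorem stmt_8 (K : Type) [Field K] [NumberField K] (ε : ℝ) (hε : 0 < ε) :
    ∃ N₀ : ℕ, ∀ I : Ideal (𝓞 K), I ≠ ⊥ → N₀ ≤ Ideal.absNorm I →
      (Ideal.absNorm I : ℝ) ^ ((1 : ℝ) - ε) < (Nat.card ((𝓞 K ⧸ I)ˣ) : ℝ) ∧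
      (Nat.card ((𝓞 K ⧸ I)ˣ) : ℝ) < (Ideal.absNorm I : ℝ) := by
  classical
  have hδ : (0 : ℝ) < ε / 2 := by positivity
  obtain ⟨T, hT⟩ := exists_T (ε / 2) hδ
  have hfin := Ideal.finite_setOf_absNorm_le (S := 𝓞 K) T
  set C := hfin.toFinset.card with hC
  set y : ℝ := ((2 : ℝ) ^ C) ^ ((ε / 2)⁻¹) with hy
  have h0y : (0 : ℝ) ≤ y := Real.rpow_nonneg (by positivity) _
  refine ⟨max 2 (⌈y⌉₊ + 1), fun I hI hN => ?_⟩
  set N := Ideal.absNorm I with hNdef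
  have hN2 : 2 ≤ N := le_trans (le_max_left _ _) hN
  have hNy : y < (N : ℝ) := by
    have h1 : (⌈y⌉₊ + 1 : ℕ) ≤ N := le_trans (le_max_right _ _) hN
    calc y ≤ (⌈y⌉₊ : ℝ) := Nat.le_ceil y
      _ < ((⌈y⌉₊ + 1 : ℕ) : ℝ) := by push_cast; linarith
      _ ≤ (N : ℝ) := by exact_mod_cast h1
  have hNpos : (0 : ℝ) < (N : ℝ) := by
    have : 0 < N := lt_of_lt_of_le (by norm_num) hN2
    exact_mod_cast this
  have hItop : I ≠ ⊤ := by
    intro h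
    have : N = 1 := Ideal.absNorm_eq_one_iff.mpr h
    omega
  haveI : Fintype (𝓞 K ⧸ I) := @Fintype.ofFinite _ (Ideal.finiteQuotientOfFreeOfNeBot I hI)
  haveI : Nontrivial (𝓞 K ⧸ I) := Ideal.Quotient.nontrivial_iff.mpr hItop
  constructor
  · -- lower bound
    have hfeq := card_units_quot_eq I hI
    set s := (factors I).toFinset with hs
    have hPn : ∀ P ∈ s, 2 ≤ Ideal.absNorm P := by
      intro P hP
      have hPprime : Prime P := prime_of_factor P (Multiset.mem_toFinset.mp hP)
      haveI : P.IsPrime := Ideal.isPrime_of_prime hPprime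
      have hne0 : Ideal.absNorm P ≠ 0 := fun h => (by
        rw [← Ideal.zero_eq_bot] at *
        exact hPprime.ne_zero (by rw [Ideal.zero_eq_bot]; exact Ideal.absNorm_eq_zero_iff.mp h))
      have hne1 : Ideal.absNorm P ≠ 1 := fun h =>
        (Ideal.isPrime_of_prime hPprime).ne_top (Ideal.absNorm_eq_one_iff.mp h)
      omega
    have hf0 : ∀ P ∈ s, (0 : ℝ) ≤ 1 - 1 / (Ideal.absNorm P : ℝ) := by
      intro P hP
      have h2 : (2 : ℝ) ≤ (Ideal.absNorm P : ℝ) := by exact_mod_cast hPn P hP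
      have : 1 / (Ideal.absNorm P : ℝ) ≤ 1 / 2 := by
        apply one_div_le_one_div_of_le <;> linarith
      linarith
    have hfhalf : ∀ P ∈ s, (1 / 2 : ℝ) ≤ 1 - 1 / (Ideal.absNorm P : ℝ) := by
      intro P hP
      have h2 : (2 : ℝ) ≤ (Ideal.absNorm P : ℝ) := by exact_mod_cast hPn P hP
      have : 1 / (Ideal.absNorm P : ℝ) ≤ 1 / 2 := by
        apply one_div_le_one_div_of_le <;> linarith
      linarith
    -- split product
    have hsplit : (∏ P ∈ s, (1 - 1 / (Ideal.absNorm P : ℝ)))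
        = (∏ P ∈ s.filter (fun P => Ideal.absNorm P ≤ T), (1 - 1 / (Ideal.absNorm P : ℝ)))
          * ∏ P ∈ s.filter (fun P => ¬ Ideal.absNorm P ≤ T), (1 - 1 / (Ideal.absNorm P : ℝ)) :=
      (Finset.prod_filter_mul_prod_filter_not s _ _).symm
    -- small primes
    have hsmallcard : (s.filter (fun P => Ideal.absNorm P ≤ T)).card ≤ C := by
      apply Finset.card_le_card
      intro P hP
      rw [Set.Finite.mem_toFinset]
      exact (Finset.mem_filter.mp hP).2
    have hsmall : ((1 / 2 : ℝ)) ^ C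
        ≤ ∏ P ∈ s.filter (fun P => Ideal.absNorm P ≤ T), (1 - 1 / (Ideal.absNorm P : ℝ)) := by
      calc ((1 / 2 : ℝ)) ^ C ≤ (1 / 2 : ℝ) ^ (s.filter (fun P => Ideal.absNorm P ≤ T)).card :=
            pow_le_pow_of_le_one (by norm_num) (by norm_num) hsmallcard
        _ = ∏ _P ∈ s.filter (fun P => Ideal.absNorm P ≤ T), (1 / 2 : ℝ) :=
            (Finset.prod_const _).symm
        _ ≤ _ := Finset.prod_le_prod (fun P _ => by norm_num)
            (fun P hP => hfhalf P (Finset.mem_filter.mp hP).1)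
    -- big primes
    have hnat : (N : ℝ) = ∏ P ∈ s, (Ideal.absNorm (P ^ (factors I).count P) : ℝ) := by
      have h1 : Ideal.absNorm I = ∏ P ∈ s, Ideal.absNorm (P ^ (factors I).count P) := by
        conv_lhs => rw [← prod_pow_count_factors I hI]
        exact map_prod Ideal.absNorm _ _
      rw [hNdef, h1, Nat.cast_prod]
    have hbig : (N : ℝ) ^ (-(ε / 2))
        ≤ ∏ P ∈ s.filter (fun P => ¬ Ideal.absNorm P ≤ T), (1 - 1 / (Ideal.absNorm P : ℝ)) := by
      have hbase0 : ∀ P ∈ s, (0 : ℝ) ≤ (Ideal.absNorm (P ^ (factors I).count P) : ℝ) :=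
        fun P _ => Nat.cast_nonneg _
      have hbase1 : ∀ P ∈ s, (1 : ℝ) ≤ (Ideal.absNorm (P ^ (factors I).count P) : ℝ) := by
        intro P hP
        have h2 : 2 ≤ Ideal.absNorm P := hPn P hP
        have hcount : (factors I).count P ≠ 0 :=
          Multiset.count_ne_zero.mpr (Multiset.mem_toFinset.mp hP)
        have : Ideal.absNorm P ≤ Ideal.absNorm (P ^ (factors I).count P) := by
          rw [map_pow]
          exact Nat.le_self_pow hcount _
        exact_mod_cast le_trans (by omega) this
      have step1 : ∀ P ∈ s.filter (fun P => ¬ Ideal.absNorm P ≤ T),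
          ((Ideal.absNorm (P ^ (factors I).count P) : ℝ)) ^ (-(ε / 2))
            ≤ 1 - 1 / (Ideal.absNorm P : ℝ) := by
        intro P hP
        obtain ⟨hPs, hPT⟩ := Finset.mem_filter.mp hP
        have hTlt : T < Ideal.absNorm P := lt_of_not_ge hPT
        have h1 := hT (Ideal.absNorm P) hTlt
        refine le_trans ?_ h1
        -- antitone in base for negative exponent
        have hPle : (Ideal.absNorm P : ℝ) ≤ (Ideal.absNorm (P ^ (factors I).count P) : ℝ) := by
          have hcount : (factors I).count P ≠ 0 :=
            Multiset.count_ne_zero.mpr (Multiset.mem_toFinset.mp hPs)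
          rw [map_pow]
          exact_mod_cast Nat.le_self_pow hcount _
        have hPpos : (0 : ℝ) < (Ideal.absNorm P : ℝ) := by
          have := hPn P hPs; positivity
        rw [Real.rpow_neg (hbase0 P hPs), Real.rpow_neg hPpos.le]
        apply inv_anti₀ (Real.rpow_pos_of_pos hPpos _)
        exact Real.rpow_le_rpow hPpos.le hPle hδ.le
      calc (N : ℝ) ^ (-(ε / 2))
          = ∏ P ∈ s, ((Ideal.absNorm (P ^ (factors I).count P) : ℝ)) ^ (-(ε / 2)) := by
            rw [Real.finset_prod_rpow s _ hbase0 _, ← hnat]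
        _ = (∏ P ∈ s.filter (fun P => Ideal.absNorm P ≤ T),
              ((Ideal.absNorm (P ^ (factors I).count P) : ℝ)) ^ (-(ε / 2)))
            * ∏ P ∈ s.filter (fun P => ¬ Ideal.absNorm P ≤ T),
              ((Ideal.absNorm (P ^ (factors I).count P) : ℝ)) ^ (-(ε / 2)) :=
            (Finset.prod_filter_mul_prod_filter_not s _ _).symm
        _ ≤ 1 * ∏ P ∈ s.filter (fun P => ¬ Ideal.absNorm P ≤ T),
              ((Ideal.absNorm (P ^ (factors I).count P) : ℝ)) ^ (-(ε / 2)) := by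
            apply mul_le_mul_of_nonneg_right
            · apply Finset.prod_le_one
              · intro P hP
                exact Real.rpow_nonneg (hbase0 P (Finset.mem_filter.mp hP).1) _
              · intro P hP
                exact Real.rpow_le_one_of_one_le_of_nonpos
                  (hbase1 P (Finset.mem_filter.mp hP).1) (by linarith)
            · apply Finset.prod_nonneg
              intro P hP
              exact Real.rpow_nonneg (hbase0 P (Finset.mem_filter.mp hP).1) _
        _ ≤ 1 * ∏ P ∈ s.filter (fun P => ¬ Ideal.absNorm P ≤ T),
              (1 - 1 / (Ideal.absNorm P : ℝ)) := by
            apply mul_le_mul_of_nonneg_left _ zero_le_one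
            apply Finset.prod_le_prod
            · intro P hP
              exact Real.rpow_nonneg (hbase0 P (Finset.mem_filter.mp hP).1) _
            · exact step1
        _ = _ := one_mul _
    -- combine
    have hprodge : ((1 / 2 : ℝ)) ^ C * (N : ℝ) ^ (-(ε / 2))
        ≤ ∏ P ∈ s, (1 - 1 / (Ideal.absNorm P : ℝ)) := by
      rw [hsplit]
      apply mul_le_mul hsmall hbig (Real.rpow_nonneg hNpos.le _)
      exact Finset.prod_nonneg fun P hP => hf0 P (Finset.mem_filter.mp hP).1
    have hyC : (2 : ℝ) ^ C < (N : ℝ) ^ (ε / 2) := by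
      have h1 := Real.rpow_lt_rpow h0y hNy hδ
      rw [hy, ← Real.rpow_mul (by positivity), inv_mul_cancel₀ (ne_of_gt hδ),
        Real.rpow_one] at h1
      exact h1
    have hkey : (N : ℝ) ^ (-(ε / 2)) < (1 / 2 : ℝ) ^ C := by
      have h2C : (0 : ℝ) < (2 : ℝ) ^ C := by positivity
      rw [Real.rpow_neg hNpos.le]
      rw [show ((1 / 2 : ℝ)) ^ C = ((2 : ℝ) ^ C)⁻¹ by rw [one_div, inv_pow]]
      exact inv_strictAnti₀ h2C hyC
    have htpos : (0 : ℝ) < (N : ℝ) ^ (-(ε / 2)) := Real.rpow_pos_of_pos hNpos _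
    calc (N : ℝ) ^ ((1 : ℝ) - ε)
        = (N : ℝ) * ((N : ℝ) ^ (-(ε / 2)) * (N : ℝ) ^ (-(ε / 2))) := by
          have h : (1 : ℝ) - ε = 1 + -(ε / 2) + -(ε / 2) := by ring
          rw [h, Real.rpow_add hNpos, Real.rpow_add hNpos, Real.rpow_one]
          ring
      _ < (N : ℝ) * ((1 / 2 : ℝ) ^ C * (N : ℝ) ^ (-(ε / 2))) := by
          apply mul_lt_mul_of_pos_left _ hNpos
          exact mul_lt_mul_of_pos_right hkey htpos
      _ ≤ (N : ℝ) * ∏ P ∈ s, (1 - 1 / (Ideal.absNorm P : ℝ)) :=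
          mul_le_mul_of_nonneg_left hprodge hNpos.le
      _ = (Nat.card ((𝓞 K ⧸ I)ˣ) : ℝ) := hfeq.symm
  · -- upper bound
    have h1 : Nat.card ((𝓞 K ⧸ I)ˣ) < N := by
      have h2 := card_units_lt (𝓞 K ⧸ I)
      have h3 : N = Fintype.card (𝓞 K ⧸ I) := by
        rw [hNdef, Ideal.absNorm_apply, Submodule.cardQuot_apply, Nat.card_eq_fintype_card]
      rw [h3, Nat.card_eq_fintype_card]
      exact h2
    exact_mod_cast h1
end

section
/- Let 𝔬 be the ring of integers of a number field of degree d, and let y ∈ 𝔬 be nonzero. Then φ(y)/|N(y)| ≥ ζ(2)^{-d}⋯ζ(d)^{-d} · ∏_{p prime, p ≤ |N(y)|} ((p-1)/p)^d, where the product is over rational primes and ζ is the Riemann zeta function. -/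
set_option synthInstance.maxHeartbeats 1000000
set_option maxHeartbeats 2000000
set_option maxRecDepth 8000
open NumberField
variable {K : Type} [Field K] [NumberField K]

lemma aux_unit_iff (P : Ideal (𝓞 K)) (hP : P.IsPrime) (hP0 : P ≠ ⊥) {e : ℕ} (he : 1 ≤ e)
    (r : 𝓞 K) : IsUnit (Ideal.Quotient.mk (P ^ e) r) ↔ r ∉ P := by
  constructor
  · rintro ⟨u, hu⟩ hr
    obtain ⟨s, hs⟩ := Ideal.Quotient.mk_surjective (↑u⁻¹ : 𝓞 K ⧸ P ^ e)
    have h1 : Ideal.Quotient.mk (P ^ e) (r * s) = Ideal.Quotient.mk (P ^ e) 1 := by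
      rw [_root_.map_mul, hs, ← hu, map_one]; exact u.mul_inv
    have h2 : r * s - 1 ∈ P := Ideal.pow_le_self (by omega) (Ideal.Quotient.eq.mp h1)
    have h3 : (1 : 𝓞 K) ∈ P := by
      have := P.sub_mem (P.mul_mem_right s hr) h2
      simpa using this
    exact hP.ne_top ((Ideal.eq_top_iff_one P).mpr h3)
  · intro hr
    haveI := hP.isMaximal hP0
    obtain ⟨c, i, hi, hci⟩ := Ideal.IsMaximal.exists_inv (by infer_instance) hr
    have hcop : IsCoprime (Ideal.span {r}) P := by
      rw [Ideal.isCoprime_iff_exists]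
      exact ⟨c * r, Ideal.mem_span_singleton.mpr (dvd_mul_left _ _), i, hi, hci⟩
    obtain ⟨a, ha, b, hb, hab⟩ := Ideal.isCoprime_iff_exists.mp (hcop.pow_right (n := e))
    obtain ⟨c', hc'⟩ := Ideal.mem_span_singleton.mp ha
    refine IsUnit.of_mul_eq_one (Ideal.Quotient.mk _ c') ?_
    have hb0 : Ideal.Quotient.mk (P ^ e) b = 0 := Ideal.Quotient.eq_zero_iff_mem.mpr hb
    have : Ideal.Quotient.mk (P ^ e) r * Ideal.Quotient.mk (P ^ e) c'
        = Ideal.Quotient.mk (P ^ e) (a + b) := by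
      rw [_root_.map_add, hb0, add_zero, hc', _root_.map_mul]
    rw [this, hab, map_one]

lemma aux_card_units (P : Ideal (𝓞 K)) (hP : P.IsPrime) (hP0 : P ≠ ⊥) {e : ℕ} (he : 1 ≤ e) :
    Nat.card ((𝓞 K ⧸ P ^ e)ˣ) * Ideal.absNorm P
      = Ideal.absNorm (P ^ e) * (Ideal.absNorm P - 1) := by
  classical
  have hPe0 : P ^ e ≠ ⊥ := by
    rw [← Ideal.zero_eq_bot] at hP0 ⊢
    exact pow_ne_zero e hP0
  haveI : Finite (𝓞 K ⧸ P ^ e) :=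
    (Ideal.absNorm_ne_zero_iff _).mp (fun h => hPe0 (Ideal.absNorm_eq_zero_iff.mp h))
  haveI := Fintype.ofFinite (𝓞 K ⧸ P ^ e)
  set J : Submodule (𝓞 K) (𝓞 K ⧸ P ^ e) := Submodule.map (P ^ e).mkQ P with hJ
  have memJ : ∀ x : 𝓞 K ⧸ P ^ e, x ∈ J ↔ ¬ IsUnit x := by
    intro x
    obtain ⟨r, rfl⟩ := Ideal.Quotient.mk_surjective x
    rw [aux_unit_iff P hP hP0 he r, not_not]
    constructor
    · rintro ⟨y, hy, hyr⟩
      have h2 : r - y ∈ P ^ e := Ideal.Quotient.eq.mp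
        (by simpa [Submodule.mkQ_apply, ← Ideal.Quotient.mk_eq_mk] using hyr.symm)
      have := P.add_mem hy (Ideal.pow_le_self (by omega) h2)
      simpa using this
    · intro hr
      exact ⟨r, hr, by rw [Submodule.mkQ_apply, Ideal.Quotient.mk_eq_mk]⟩
  have cardJ_mul : Nat.card J * Nat.card (𝓞 K ⧸ P) = Nat.card (𝓞 K ⧸ P ^ e) :=
    Submodule.card_quotient_mul_card_quotient P (P ^ e) (Ideal.pow_le_self (by omega))
  have hu : ∀ x : {x : 𝓞 K ⧸ P ^ e // x ∉ J}, IsUnit x.1 :=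
    fun x => not_not.mp (fun h => x.2 ((memJ x.1).mpr h))
  have e1 : ((𝓞 K ⧸ P ^ e)ˣ) ≃ {x : 𝓞 K ⧸ P ^ e // x ∉ J} :=
    { toFun := fun u => ⟨u, fun h => (memJ u).mp h u.isUnit⟩
      invFun := fun x => (hu x).unit
      left_inv := fun u => Units.ext ((hu _).unit_spec)
      right_inv := fun x => Subtype.ext ((hu x).unit_spec) }
  have cardsplit : Nat.card ((𝓞 K ⧸ P ^ e)ˣ) + Nat.card J = Nat.card (𝓞 K ⧸ P ^ e) := by
    rw [Nat.card_congr e1, Nat.card_eq_fintype_card, Nat.card_eq_fintype_card,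
      Nat.card_eq_fintype_card, Fintype.card_subtype_compl (fun x => x ∈ J)]
    have hle : Fintype.card {x : 𝓞 K ⧸ P ^ e // x ∈ J} ≤ Fintype.card (𝓞 K ⧸ P ^ e) :=
      Fintype.card_subtype_le _
    omega
  have hnorm1 : Ideal.absNorm P = Nat.card (𝓞 K ⧸ P) := rfl
  have hnorm2 : Ideal.absNorm (P ^ e) = Nat.card (𝓞 K ⧸ P ^ e) := rfl
  have hn1 : 1 ≤ Ideal.absNorm P := Nat.one_le_iff_ne_zero.mpr
    (fun h => hP0 (Ideal.absNorm_eq_zero_iff.mp h))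
  zify [hn1]
  rw [hnorm1, hnorm2]
  have h1 : ((Nat.card ((𝓞 K ⧸ P ^ e)ˣ)) : ℤ) + Nat.card J = Nat.card (𝓞 K ⧸ P ^ e) := by
    exact_mod_cast cardsplit
  have h2 : ((Nat.card J) : ℤ) * Nat.card (𝓞 K ⧸ P) = Nat.card (𝓞 K ⧸ P ^ e) := by
    exact_mod_cast cardJ_mul
  linear_combination (Nat.card (𝓞 K ⧸ P) : ℤ) * h1 - h2

def piUnitsEquiv {ι : Type*} {M : ι → Type*} [∀ i, Monoid (M i)] :
    ((∀ i, M i)ˣ) ≃ ∀ i, (M i)ˣ where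
  toFun u i := ⟨u.val i, u.inv i, congrFun u.val_inv i, congrFun u.inv_val i⟩
  invFun f := ⟨fun i => f i, fun i => ((f i)⁻¹ : (M i)ˣ),
    funext fun i => (f i).val_inv, funext fun i => (f i).inv_val⟩
  left_inv u := Units.ext rfl
  right_inv f := funext fun i => Units.ext rfl

lemma aux_residue (P : Ideal (𝓞 K)) (hP : P.IsPrime) (hP0 : P ≠ ⊥) :
    (ringChar (𝓞 K ⧸ P)).Prime ∧ ringChar (𝓞 K ⧸ P) ∣ Ideal.absNorm P ∧
      ((ringChar (𝓞 K ⧸ P) : 𝓞 K) ∈ P) := by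
  haveI := hP.isMaximal hP0
  haveI : Finite (𝓞 K ⧸ P) := (Ideal.absNorm_ne_zero_iff _).mp
    (fun h => hP0 (Ideal.absNorm_eq_zero_iff.mp h))
  haveI := Fintype.ofFinite (𝓞 K ⧸ P)
  haveI : Nontrivial (𝓞 K ⧸ P) := Ideal.Quotient.nontrivial_iff.mpr hP.ne_top
  have hprime : (ringChar (𝓞 K ⧸ P)).Prime := CharP.char_is_prime (𝓞 K ⧸ P) _
  have hdvd : ringChar (𝓞 K ⧸ P) ∣ Ideal.absNorm P := by
    have heq : ringChar (𝓞 K ⧸ P) = addOrderOf (1 : 𝓞 K ⧸ P) :=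
      CharP.eq _ (ringChar.charP _) (CharP.addOrderOf_one _)
    rw [Ideal.absNorm_apply, Submodule.cardQuot_apply, Nat.card_eq_fintype_card, heq]
    exact addOrderOf_dvd_card
  have hmem : ((ringChar (𝓞 K ⧸ P) : 𝓞 K) ∈ P) := by
    rw [← Ideal.Quotient.eq_zero_iff_mem, map_natCast]
    exact CharP.cast_eq_zero _ _
  exact ⟨hprime, hdvd, hmem⟩

lemma aux_fiber_card (p : ℕ) (hp : p.Prime) (s : Finset (Ideal (𝓞 K)))
    (hs : ∀ P ∈ s, P.IsPrime ∧ P ≠ ⊥ ∧ (p : 𝓞 K) ∈ P) :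
    s.card ≤ Module.finrank ℚ K := by
  have hspan : Ideal.absNorm (Ideal.span {(p : 𝓞 K)}) = p ^ Module.finrank ℚ K := by
    rw [Ideal.absNorm_span_singleton]
    have h0 : ((p : ℕ) : 𝓞 K) = algebraMap ℤ (𝓞 K) (p : ℤ) := by push_cast; rfl
    rw [h0, Algebra.norm_algebraMap_of_basis (Module.Free.chooseBasis ℤ (𝓞 K)),
      Int.natAbs_pow, ← Module.finrank_eq_card_chooseBasisIndex,
      NumberField.RingOfIntegers.rank]
    norm_num
  have hdvd1 : ∀ P ∈ s, Ideal.absNorm P ∣ p ^ Module.finrank ℚ K := fun P hPs => by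
    have := Ideal.absNorm_dvd_absNorm_of_le
      ((Ideal.span_singleton_le_iff_mem _).mpr (hs P hPs).2.2)
    rwa [hspan] at this
  have hpdvd : ∀ P ∈ s, p ∣ Ideal.absNorm P := fun P hPs => by
    obtain ⟨k, hk, hkP⟩ := (Nat.dvd_prime_pow hp).mp (hdvd1 P hPs)
    have hk0 : k ≠ 0 := by
      rintro rfl
      exact (hs P hPs).1.ne_top (Ideal.absNorm_eq_one_iff.mp (by simpa using hkP))
    rw [hkP]; exact dvd_pow_self p hk0
  have hprod : (∏ P ∈ s, P) ∣ Ideal.span {(p : 𝓞 K)} := by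
    refine Finset.prod_dvd_of_coprime ?_ (fun P hPs => Ideal.dvd_iff_le.mpr
      ((Ideal.span_singleton_le_iff_mem _).mpr (hs P hPs).2.2))
    intro P hPs Q hQs hne
    exact Ideal.isCoprime_iff_sup_eq.mpr <| Ideal.IsMaximal.coprime_of_ne
      ((hs P hPs).1.isMaximal (hs P hPs).2.1) ((hs Q hQs).1.isMaximal (hs Q hQs).2.1) hne
  have h2 : (∏ P ∈ s, Ideal.absNorm P) ∣ p ^ Module.finrank ℚ K := by
    have := map_dvd Ideal.absNorm hprod
    rwa [map_prod, hspan] at this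
  have h3 : p ^ s.card ∣ ∏ P ∈ s, Ideal.absNorm P := by
    rw [← Finset.prod_const]
    exact Finset.prod_dvd_prod_of_dvd _ _ hpdvd
  exact (Nat.pow_dvd_pow_iff_le_right hp.one_lt).mp (h3.trans h2)

open scoped Classical in
open UniqueFactorizationMonoid in
lemma aux_crt (I : Ideal (𝓞 K)) (hI : I ≠ ⊥) :
    Nat.card ((𝓞 K ⧸ I)ˣ) = ∏ P ∈ (factors I).toFinset,
      Nat.card ((𝓞 K ⧸ P ^ (factors I).count P)ˣ) := by
  have e1 : ((𝓞 K ⧸ I)ˣ) ≃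
      ∀ P : (factors I).toFinset, ((𝓞 K ⧸ (P : Ideal (𝓞 K)) ^ (factors I).count ↑P)ˣ) :=
    (Units.mapEquiv (IsDedekindDomain.quotientEquivPiFactors hI).toMulEquiv).toEquiv.trans
      (piUnitsEquiv (M := fun P : ((factors I).toFinset : Finset (Ideal (𝓞 K))) => 𝓞 K ⧸ (P : Ideal (𝓞 K)) ^ (factors I).count ↑P))
  rw [Nat.card_congr e1, Nat.card_pi]
  exact Finset.prod_coe_sort (factors I).toFinset (fun P => Nat.card ((𝓞 K ⧸ P ^ (factors I).count P)ˣ))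

open scoped Classical in
open UniqueFactorizationMonoid in
lemma aux_norm_prod (I : Ideal (𝓞 K)) (hI : I ≠ ⊥) :
    Ideal.absNorm I = ∏ P ∈ (factors I).toFinset,
      Ideal.absNorm (P ^ (factors I).count P) := by
  have h : ∏ P ∈ (factors I).toFinset, P ^ (factors I).count P = I := by
    rw [← Finset.prod_multiset_count]
    exact associated_iff_eq.mp (factors_prod hI)
  conv_lhs => rw [← h]
  rw [map_prod]

open UniqueFactorizationMonoid in
/-- Let `𝔬` be the ring of integers of a number field of
degree `d` and `y ∈ 𝔬` nonzero. Then
`φ(y)/|N(y)| ≥ ζ(2)^{-d}⋯ζ(d)^{-d} · ∏_{p ≤ |N(y)|} ((p-1)/p)^d`,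
the product being over rational primes, where `ζ(k) = ∑_{n≥1} n^{-k}`. -/
theorem stmt_11 (K : Type) [Field K] [NumberField K] (y : 𝓞 K) (hy : y ≠ 0) :
    (Nat.card ((𝓞 K ⧸ Ideal.span {y})ˣ) : ℝ) / ((Algebra.norm ℤ y).natAbs : ℝ) ≥
      (∏ k ∈ Finset.Icc 2 (Module.finrank ℚ K),
        ((∑' n : ℕ+, (1 : ℝ) / (n : ℝ) ^ k)⁻¹) ^ (Module.finrank ℚ K)) *
      ∏ p ∈ (Finset.range ((Algebra.norm ℤ y).natAbs + 1)).filter Nat.Prime,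
        (((p : ℝ) - 1) / (p : ℝ)) ^ (Module.finrank ℚ K) := by
  classical
  set d := Module.finrank ℚ K with hd
  set I : Ideal (𝓞 K) := Ideal.span {y} with hIdef
  have hI : I ≠ ⊥ := by simpa [hIdef, Ideal.span_singleton_eq_bot] using hy
  have hNdef : Ideal.absNorm I = (Algebra.norm ℤ y).natAbs := Ideal.absNorm_span_singleton y
  set N := (Algebra.norm ℤ y).natAbs with hNd
  have hN0 : N ≠ 0 := by
    rw [← hNdef]; exact fun h => hI (Ideal.absNorm_eq_zero_iff.mp h)
  set S := (Finset.range (N + 1)).filter Nat.Prime with hS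
  set F := (factors I).toFinset with hF
  -- facts about P ∈ F
  have hfacts : ∀ P ∈ F, P.IsPrime ∧ P ≠ ⊥ ∧ 1 ≤ (factors I).count P := by
    intro P hP
    have hmem : P ∈ factors I := Multiset.mem_toFinset.mp hP
    have hprime : Prime P := prime_of_factor _ hmem
    exact ⟨Ideal.isPrime_of_prime hprime,
      fun h => hprime.ne_zero (by rw [Ideal.zero_eq_bot]; exact h),
      Multiset.count_pos.mpr hmem⟩
  -- ζ factor ≤ 1
  have hzeta_nonneg : (0:ℝ) ≤ ∏ k ∈ Finset.Icc 2 d, ((∑' n : ℕ+, (1 : ℝ) / (n : ℝ) ^ k)⁻¹) ^ d := by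
    refine Finset.prod_nonneg fun k _ => pow_nonneg (inv_nonneg.mpr ?_) _
    exact tsum_nonneg fun n => by positivity
  have hzeta_le_one : (∏ k ∈ Finset.Icc 2 d, ((∑' n : ℕ+, (1 : ℝ) / (n : ℝ) ^ k)⁻¹) ^ d) ≤ 1 := by
    refine Finset.prod_le_one (fun k _ => pow_nonneg (inv_nonneg.mpr
      (tsum_nonneg fun n => by positivity)) _) fun k hk => ?_
    have hk2 : 2 ≤ k := (Finset.mem_Icc.mp hk).1
    have hsum : Summable (fun n : ℕ+ => (1:ℝ) / (n : ℝ) ^ k) := by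
      have h := (Real.summable_one_div_nat_pow (p := k)).mpr hk2
      exact h.comp_injective PNat.coe_injective
    have h1 : (1:ℝ) ≤ ∑' n : ℕ+, (1 : ℝ) / (n : ℝ) ^ k := by
      have := Summable.le_tsum hsum 1 (fun j _ => by positivity)
      simpa using this
    have : (∑' n : ℕ+, (1 : ℝ) / (n : ℝ) ^ k)⁻¹ ≤ 1 := by
      refine inv_le_one_of_one_le₀ h1
    exact pow_le_one₀ (inv_nonneg.mpr (by linarith)) this
  have hB_nonneg : (0:ℝ) ≤ ∏ p ∈ S, (((p : ℝ) - 1) / (p : ℝ)) ^ d := by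
    refine Finset.prod_nonneg fun p hp => pow_nonneg ?_ _
    have hp2 := (Finset.mem_filter.mp hp).2.two_le
    have h1 : (1:ℝ) ≤ (p:ℝ) := by exact_mod_cast Nat.one_le_of_lt hp2
    exact div_nonneg (by linarith) (by linarith)
  rw [ge_iff_le]
  refine le_trans (mul_le_of_le_one_left hB_nonneg hzeta_le_one) ?_
  -- per-factor key bound
  have hchar_nonneg : ∀ P ∈ F, (0:ℝ) ≤ ((ringChar (𝓞 K ⧸ P) : ℝ) - 1) / (ringChar (𝓞 K ⧸ P) : ℝ) := by
    intro P hP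
    obtain ⟨hPp, hP0, he⟩ := hfacts P hP
    have hp2 : 2 ≤ ringChar (𝓞 K ⧸ P) := (aux_residue P hPp hP0).1.two_le
    have : (2:ℝ) ≤ (ringChar (𝓞 K ⧸ P) : ℝ) := by exact_mod_cast hp2
    exact div_nonneg (by linarith) (by linarith)
  have key : ∀ P ∈ F, ((ringChar (𝓞 K ⧸ P) : ℝ) - 1) / (ringChar (𝓞 K ⧸ P) : ℝ)
      ≤ (Nat.card ((𝓞 K ⧸ P ^ (factors I).count P)ˣ) : ℝ)
        / (Ideal.absNorm (P ^ (factors I).count P) : ℝ) := by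
    intro P hP
    obtain ⟨hPp, hP0, he⟩ := hfacts P hP
    obtain ⟨hcp, hdvdp, hmemp⟩ := aux_residue P hPp hP0
    have hcard := aux_card_units P hPp hP0 he
    have hn0 : Ideal.absNorm P ≠ 0 := fun h => hP0 (Ideal.absNorm_eq_zero_iff.mp h)
    have hn1 : 1 ≤ Ideal.absNorm P := Nat.pos_of_ne_zero hn0
    have hq0 : Ideal.absNorm (P ^ (factors I).count P) ≠ 0 := by
      intro h
      have hbot := Ideal.absNorm_eq_zero_iff.mp h
      rw [← Ideal.zero_eq_bot] at hbot
      exact hP0 (by rw [Ideal.zero_eq_bot] at *; exact (pow_eq_zero_iff (by omega)).mp hbot)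
    have hple : ringChar (𝓞 K ⧸ P) ≤ Ideal.absNorm P := Nat.le_of_dvd (by omega) hdvdp
    have hp2 : 2 ≤ ringChar (𝓞 K ⧸ P) := hcp.two_le
    -- cast to ℝ
    have hcardR : (Nat.card ((𝓞 K ⧸ P ^ (factors I).count P)ˣ) : ℝ) * (Ideal.absNorm P : ℝ)
        = (Ideal.absNorm (P ^ (factors I).count P) : ℝ) * ((Ideal.absNorm P : ℝ) - 1) := by
      have := congrArg (Nat.cast : ℕ → ℝ) hcard
      push_cast [hn1] at this
      convert this using 2
    have hpR : (2:ℝ) ≤ (ringChar (𝓞 K ⧸ P) : ℝ) := by exact_mod_cast hp2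
    have hnR : (1:ℝ) ≤ (Ideal.absNorm P : ℝ) := by exact_mod_cast hn1
    have hpleR : (ringChar (𝓞 K ⧸ P) : ℝ) ≤ (Ideal.absNorm P : ℝ) := by exact_mod_cast hple
    have hqR : (0:ℝ) < (Ideal.absNorm (P ^ (factors I).count P) : ℝ) := by
      exact_mod_cast Nat.pos_of_ne_zero hq0
    rw [div_le_div_iff₀ (by linarith) hqR]
    nlinarith [hcardR]
  -- product formula
  have hprodform : (Nat.card ((𝓞 K ⧸ I)ˣ) : ℝ) / (N : ℝ)
      = ∏ P ∈ F, ((Nat.card ((𝓞 K ⧸ P ^ (factors I).count P)ˣ) : ℝ)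
          / (Ideal.absNorm (P ^ (factors I).count P) : ℝ)) := by
    rw [aux_crt I hI, ← hNdef, aux_norm_prod I hI, ← hF]
    push_cast
    rw [Finset.prod_div_distrib]
  -- grouping over rational primes
  have hmapsto : ∀ P ∈ F, ringChar (𝓞 K ⧸ P) ∈ S := by
    intro P hP
    obtain ⟨hPp, hP0, he⟩ := hfacts P hP
    obtain ⟨hcp, hdvdp, -⟩ := aux_residue P hPp hP0
    have hPdvdI : P ∣ I := dvd_of_mem_factors (Multiset.mem_toFinset.mp hP)
    have hdN : Ideal.absNorm P ∣ N := by
      rw [← hNdef]; exact map_dvd Ideal.absNorm hPdvdI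
    have hle : ringChar (𝓞 K ⧸ P) ≤ N :=
      Nat.le_of_dvd (Nat.pos_of_ne_zero hN0) (hdvdp.trans hdN)
    exact Finset.mem_filter.mpr ⟨Finset.mem_range.mpr (by omega), hcp⟩
  have hgroup := Finset.prod_fiberwise_of_maps_to hmapsto
    (fun P => ((ringChar (𝓞 K ⧸ P) : ℝ) - 1) / (ringChar (𝓞 K ⧸ P) : ℝ))
  calc (∏ p ∈ S, (((p:ℝ) - 1) / (p:ℝ)) ^ d)
      ≤ ∏ p ∈ S, ∏ P ∈ F.filter (fun P => ringChar (𝓞 K ⧸ P) = p),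
          ((ringChar (𝓞 K ⧸ P) : ℝ) - 1) / (ringChar (𝓞 K ⧸ P) : ℝ) := by
        refine Finset.prod_le_prod (fun p hp => ?_) (fun p hp => ?_)
        · have hp2 := (Finset.mem_filter.mp hp).2.two_le
          have h1 : (1:ℝ) ≤ (p:ℝ) := by exact_mod_cast Nat.one_le_of_lt hp2
          exact pow_nonneg (div_nonneg (by linarith) (by linarith)) _
        · have hpp := (Finset.mem_filter.mp hp).2
          have hp2 := hpp.two_le
          have h1 : (1:ℝ) ≤ (p:ℝ) := by exact_mod_cast Nat.one_le_of_lt hp2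
          have hcardfib : (F.filter (fun P => ringChar (𝓞 K ⧸ P) = p)).card ≤ d := by
            refine aux_fiber_card p hpp _ (fun P hPf => ?_)
            obtain ⟨hPF, hchar⟩ := Finset.mem_filter.mp hPf
            obtain ⟨hPp, hP0, he⟩ := hfacts P hPF
            refine ⟨hPp, hP0, ?_⟩
            have := (aux_residue P hPp hP0).2.2
            rwa [hchar] at this
          have heqfib : ∏ P ∈ F.filter (fun P => ringChar (𝓞 K ⧸ P) = p),
              ((ringChar (𝓞 K ⧸ P) : ℝ) - 1) / (ringChar (𝓞 K ⧸ P) : ℝ)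
              = (((p:ℝ) - 1) / (p:ℝ)) ^ (F.filter (fun P => ringChar (𝓞 K ⧸ P) = p)).card := by
            rw [Finset.prod_congr rfl (fun P hPf => by
              rw [(Finset.mem_filter.mp hPf).2]), Finset.prod_const]
          rw [heqfib]
          refine pow_le_pow_of_le_one (div_nonneg (by linarith) (by linarith)) ?_ hcardfib
          rw [div_le_one (by linarith)]; linarith
    _ = ∏ P ∈ F, ((ringChar (𝓞 K ⧸ P) : ℝ) - 1) / (ringChar (𝓞 K ⧸ P) : ℝ) := hgroup
    _ ≤ ∏ P ∈ F, ((Nat.card ((𝓞 K ⧸ P ^ (factors I).count P)ˣ) : ℝ)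
          / (Ideal.absNorm (P ^ (factors I).count P) : ℝ)) :=
        Finset.prod_le_prod hchar_nonneg key
    _ = (Nat.card ((𝓞 K ⧸ I)ˣ) : ℝ) / (N : ℝ) := hprodform.symm
end
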